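/- Under the hypotheses μ ∈ W^{1,2}(-s,s), μ(0) = 1, |μ| ≤ 1, one has the intermediate bound ∫_{-s}^{s} (1 − μ²) dx ≤ 4s² ∫_{-s}^{s} (μ')²/(1 − μ²) dx. -/

import Mathlib

open MeasureTheory

set_option maxHeartbeats 1000000
theorem one_sub_sq_estimate (s : ℝ) (hs : 0 < s) (μ μ' : ℝ → ℝ)
    (hcont : ContinuousOn μ (Set.Icc (-s) s))
    (hderiv : ∀ x ∈ Set.Ioo (-s) s, HasDerivAt μ (μ' x) x)
    (h0 : μ 0 = 1) (hbound : ∀ x ∈ Set.Ioo (-s) s, |μ x| ≤ 1)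
    (hint : IntegrableOn (fun x => (μ' x) ^ 2 / (1 - (μ x) ^ 2)) (Set.Ioo (-s) s)) :
    ∫ x in Set.Ioo (-s) s, (1 - (μ x) ^ 2) ≤
      4 * s ^ 2 * ∫ x in Set.Ioo (-s) s, (μ' x) ^ 2 / (1 - (μ x) ^ 2) := by
  set F : ℝ → ℝ := fun x => (μ' x) ^ 2 / (1 - (μ x) ^ 2) with hFdef
  clear_value F
  set I : ℝ := ∫ x in Set.Ioo (-s) s, F x with hIdef
  clear_value I
  have hF0 : ∀ t ∈ Set.Ioo (-s) s, 0 ≤ F t := by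
    intro t ht
    have h1 := abs_le.mp (hbound t ht)
    rw [hFdef]
    exact div_nonneg (sq_nonneg _) (by nlinarith)
  have hI0 : 0 ≤ I := by rw [hIdef]; exact setIntegral_nonneg measurableSet_Ioo hF0
  -- derivative vanishes where |μ| = 1
  have hderiv0 : ∀ t ∈ Set.Ioo (-s) s, 1 - (μ t) ^ 2 = 0 → μ' t = 0 := by
    intro t ht h
    have hIoo : Set.Ioo (-s) s ∈ nhds t := isOpen_Ioo.mem_nhds ht
    have h1 : μ t = 1 ∨ μ t = -1 := by
      have h2 : (μ t - 1) * (μ t + 1) = 0 := by nlinarith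
      rcases mul_eq_zero.mp h2 with h3 | h3
      · exact Or.inl (by linarith)
      · exact Or.inr (by linarith)
    rcases h1 with h1 | h1
    · refine IsLocalMax.hasDerivAt_eq_zero ?_ (hderiv t ht)
      refine Filter.eventually_of_mem hIoo fun y hy => ?_
      rw [h1]; exact (abs_le.mp (hbound y hy)).2
    · refine IsLocalMin.hasDerivAt_eq_zero ?_ (hderiv t ht)
      refine Filter.eventually_of_mem hIoo fun y hy => ?_
      rw [h1]; exact (abs_le.mp (hbound y hy)).1
  -- the key pointwise estimate
  have hkey : ∀ x ∈ Set.Ioo (-s) s, 1 - μ x ≤ s * I := by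
    intro x hx
    refine le_of_forall_pos_le_add fun δ hδ => ?_
    set ε : ℝ := min (δ ^ 2 / 4) 1 with hεdef
    clear_value ε
    have hε : 0 < ε := by rw [hεdef]; exact lt_min (by positivity) one_pos
    have hε1 : ε ≤ 1 := by rw [hεdef]; exact min_le_right _ _
    have hsqε1 : Real.sqrt ε ≤ 1 := by
      rw [show (1:ℝ) = Real.sqrt 1 by simp]
      exact Real.sqrt_le_sqrt hε1
    have hsqε : Real.sqrt ε ≤ δ / 2 := by
      calc Real.sqrt ε ≤ Real.sqrt (δ ^ 2 / 4) := Real.sqrt_le_sqrt (hεdef ▸ min_le_left _ _)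
        _ = δ / 2 := by
            rw [show δ ^ 2 / 4 = (δ / 2) ^ 2 by ring, Real.sqrt_sq (by positivity)]
    set γ : ℝ := δ / (2 * s) with hγdef
    clear_value γ
    have hγ : 0 < γ := by rw [hγdef]; positivity
    set g : ℝ → ℝ := fun t => Real.sqrt (1 - μ t + ε) with hgdef
    set g' : ℝ → ℝ := fun t => (-μ' t) / (2 * Real.sqrt (1 - μ t + ε)) with hg'def
    clear_value g g'
    have hfpos : ∀ t ∈ Set.Ioo (-s) s, 0 < 1 - μ t + ε := by
      intro t ht
      have h1 := abs_le.mp (hbound t ht)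
      linarith
    have hg : ∀ t ∈ Set.Ioo (-s) s, HasDerivAt g (g' t) t := by
      intro t ht
      have h1 : HasDerivAt (fun y => 1 - μ y + ε) (-μ' t) t := by
        simpa using (((hderiv t ht).const_sub 1).add_const ε)
      simpa [hgdef, hg'def] using h1.sqrt (ne_of_gt (hfpos t ht))
    have hg'sq : ∀ t ∈ Set.Ioo (-s) s, (g' t) ^ 2 ≤ F t / 2 := by
      intro t ht
      rcases eq_or_lt_of_le (show (0:ℝ) ≤ 1 - (μ t) ^ 2 by
          have h1 := abs_le.mp (hbound t ht); nlinarith) with h | h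
      · have hz := hderiv0 t ht h.symm
        have h2 := hF0 t ht
        simp only [hg'def, hz, neg_zero, zero_div]
        simpa using by positivity
      · have hft := hfpos t ht
        have h2 := abs_le.mp (hbound t ht)
        have hsq : Real.sqrt (1 - μ t + ε) ^ 2 = 1 - μ t + ε := Real.sq_sqrt hft.le
        have hLHS : (g' t) ^ 2 = (μ' t) ^ 2 / (4 * (1 - μ t + ε)) := by
          simp only [hg'def]
          rw [div_pow, mul_pow, hsq, neg_pow]
          ring_nf
        rw [hLHS, hFdef]
        simp only [div_div]
        exact div_le_div_of_nonneg_left (sq_nonneg _)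
          (by linarith only [h])
          (by linarith only [sq_nonneg (1 - μ t), hε])
    have hg'abs : ∀ t ∈ Set.Ioo (-s) s, |g' t| ≤ F t + 1 := by
      intro t ht
      have h1 := hg'sq t ht
      have h2 := hF0 t ht
      linarith only [h1, h2, sq_nonneg (|g' t| - 1), sq_abs (g' t)]
    -- measurability of g' on Ioo
    have hmeas : AEStronglyMeasurable g' (volume.restrict (Set.Ioo (-s) s)) := by
      have hμm : AEMeasurable μ (volume.restrict (Set.Ioo (-s) s)) :=
        (hcont.mono Set.Ioo_subset_Icc_self).aemeasurable measurableSet_Ioo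
      have hsqm : AEMeasurable (fun t => 2 * Real.sqrt (1 - μ t + ε))
          (volume.restrict (Set.Ioo (-s) s)) :=
        aemeasurable_const.mul
          (Real.continuous_sqrt.measurable.comp_aemeasurable
            ((aemeasurable_const.sub hμm).add aemeasurable_const))
      have hdm : AEMeasurable (fun t => (-(deriv μ t)) / (2 * Real.sqrt (1 - μ t + ε)))
          (volume.restrict (Set.Ioo (-s) s)) :=
        ((measurable_deriv μ).aemeasurable.neg).div hsqm
      refine AEStronglyMeasurable.congr hdm.aestronglyMeasurable ?_
      filter_upwards [ae_restrict_mem measurableSet_Ioo] with t ht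
      simp only [hg'def]
      rw [(hderiv t ht).deriv]
    have hx0 : (0:ℝ) ∈ Set.Ioo (-s) s := ⟨by linarith, hs⟩
    have hsub : Set.uIcc 0 x ⊆ Set.Ioo (-s) s :=
      Set.ordConnected_Ioo.uIcc_subset hx0 hx
    have hsubIoc : Set.uIoc 0 x ⊆ Set.Ioo (-s) s :=
      Set.uIoc_subset_uIcc.trans hsub
    have hFuIoc : IntegrableOn F (Set.uIoc 0 x) := hint.mono_set hsubIoc
    have hvol : volume (Set.uIoc 0 x) < ⊤ := by
      rw [Set.uIoc]; exact measure_Ioc_lt_top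
    have hconst : ∀ c : ℝ, IntegrableOn (fun _ => c) (Set.uIoc 0 x) := fun c =>
      integrableOn_const hvol.ne
    have hg'int : IntegrableOn g' (Set.uIoc 0 x) := by
      refine Integrable.mono' (hFuIoc.add (hconst 1)) ?_ ?_
      · exact hmeas.mono_measure (Measure.restrict_mono hsubIoc le_rfl)
      · filter_upwards [ae_restrict_mem measurableSet_uIoc] with t ht
        simpa [Real.norm_eq_abs] using hg'abs t (hsubIoc ht)
    have hii : IntervalIntegrable g' volume 0 x := intervalIntegrable_iff.2 hg'int
    have hftc : ∫ t in (0:ℝ)..x, g' t = g x - g 0 :=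
      intervalIntegral.integral_eq_sub_of_hasDerivAt (fun t ht => hg t (hsub ht)) hii
    have hg0 : g 0 = Real.sqrt ε := by simp only [hgdef]; rw [h0]; norm_num
    -- the AM-GM weight
    have hIγ : 0 < I + γ := by linarith
    set a : ℝ := Real.sqrt (2 * s / (I + γ)) with hadef
    clear_value a
    have ha : 0 < a := by rw [hadef]; exact Real.sqrt_pos.2 (div_pos (by linarith) hIγ)
    set b : ℝ := Real.sqrt (s * (I + γ) / 2) with hbdef
    clear_value b
    have hb : 0 < b := by rw [hbdef]; exact Real.sqrt_pos.2 (by positivity)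
    have hab : a * b = s := by
      rw [hadef, hbdef, ← Real.sqrt_mul (le_of_lt (div_pos (by linarith) hIγ))]
      rw [show 2 * s / (I + γ) * (s * (I + γ) / 2) = s ^ 2 by field_simp]
      exact Real.sqrt_sq hs.le
    have ha2 : a ^ 2 = 2 * s / (I + γ) := by rw [hadef]; exact Real.sq_sqrt (le_of_lt (div_pos (by linarith) hIγ))
    have hb2 : b ^ 2 = s * (I + γ) / 2 := by rw [hbdef]; exact Real.sq_sqrt (by positivity)
    -- pointwise AM-GM bound
    have hptb : ∀ t ∈ Set.Ioo (-s) s, |g' t| ≤ a / 4 * F t + 1 / (2 * a) := by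
      intro t ht
      have h1 := hg'sq t ht
      have h7 : 2 * a * |g' t| ≤ a ^ 2 * |g' t| ^ 2 + 1 := by
        linarith only [sq_nonneg (a * |g' t| - 1)]
      rw [sq_abs] at h7
      have h2a : (0:ℝ) < 2 * a := by linarith only [ha]
      have ha0 : a ≠ 0 := ne_of_gt ha
      have h86 : (2 * a * |g' t|) / (2 * a) ≤ (a ^ 2 * (g' t) ^ 2 + 1) / (2 * a) := by
        gcongr
      rw [mul_div_cancel_left₀ _ (ne_of_gt h2a)] at h86
      have hr : (a ^ 2 * (g' t) ^ 2 + 1) / (2 * a) = a / 2 * (g' t) ^ 2 + 1 / (2 * a) := by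
        field_simp
      rw [hr] at h86
      have h9 : a / 2 * (g' t) ^ 2 ≤ a / 2 * (F t / 2) :=
        mul_le_mul_of_nonneg_left h1 (by positivity)
      have h10 : a / 2 * (F t / 2) = a / 4 * F t := by ring
      linarith only [h86, h9, h10]
    -- the chain of integral bounds
    have h1 : g x - g 0 ≤ |∫ t in (0:ℝ)..x, g' t| := by
      rw [hftc]; exact le_abs_self _
    have h2 : |∫ t in (0:ℝ)..x, g' t| ≤ ∫ t in Set.uIoc 0 x, |g' t| := by
      simpa [Real.norm_eq_abs] using
        intervalIntegral.norm_integral_le_integral_norm_uIoc (f := g') (a := 0) (b := x)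
          (μ := volume)
    have h3 : ∫ t in Set.uIoc 0 x, |g' t| ≤
        ∫ t in Set.uIoc 0 x, (a / 4 * F t + 1 / (2 * a)) := by
      refine setIntegral_mono_on hg'int.abs ((hFuIoc.const_mul _).add (hconst _))
        measurableSet_uIoc fun t ht => hptb t (hsubIoc ht)
    have h4 : ∫ t in Set.uIoc 0 x, (a / 4 * F t + 1 / (2 * a)) =
        a / 4 * (∫ t in Set.uIoc 0 x, F t) +
          (volume (Set.uIoc 0 x)).toReal * (1 / (2 * a)) := by
      rw [integral_add (hFuIoc.const_mul _) (hconst _), integral_const_mul, setIntegral_const, measureReal_def,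
        smul_eq_mul]
    have h5 : ∫ t in Set.uIoc 0 x, F t ≤ I := by
      rw [hIdef]
      refine setIntegral_mono_set hint ?_ (HasSubset.Subset.eventuallyLE hsubIoc)
      filter_upwards [ae_restrict_mem measurableSet_Ioo] with t ht using hF0 t ht
    have h6 : (volume (Set.uIoc 0 x)).toReal ≤ s := by
      rw [Set.uIoc, Real.volume_Ioc, ENNReal.toReal_ofReal (by
        rcases le_total 0 x with h | h <;> simp [max_eq_right, max_eq_left, min_eq_left,
          min_eq_right, h] <;> linarith)]
      rcases hx with ⟨hx1, hx2⟩
      rcases le_total 0 x with h | h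
      · rw [max_eq_right h, min_eq_left h]; linarith
      · rw [max_eq_left h, min_eq_right h]; linarith
    have key1 : a * (I + γ) / 4 = b / 2 := by
      apply mul_left_cancel₀ ha.ne'
      have h7 : a ^ 2 * (I + γ) = 2 * s := by rw [ha2]; field_simp
      linear_combination h7 / 4 - hab / 2
    have key2 : s / (2 * a) = b / 2 := by
      rw [← hab]; field_simp
    have hchain : g x - g 0 ≤ b := by
      have hI5 : a / 4 * (∫ t in Set.uIoc 0 x, F t) ≤ a / 4 * I :=
        mul_le_mul_of_nonneg_left h5 (by positivity)
      have hm : (volume (Set.uIoc 0 x)).toReal * (1 / (2 * a)) ≤ s * (1 / (2 * a)) :=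
        mul_le_mul_of_nonneg_right h6 (by positivity)
      have htrans := h1.trans (h2.trans (h3.trans_eq h4))
      have h8 : a / 4 * I ≤ a * (I + γ) / 4 := by
        linarith only [mul_pos ha hγ]
      have h9 : s * (1 / (2 * a)) = s / (2 * a) := by ring
      linarith only [htrans, hI5, hm, h8, h9, key1, key2]
    -- conclude
    have hgx : g x ≤ Real.sqrt ε + b := by rw [hg0] at hchain; linarith
    have hgxsq : (g x) ^ 2 = 1 - μ x + ε := by rw [hgdef]; exact Real.sq_sqrt (hfpos x hx).le
    have hgxnn : 0 ≤ g x := by rw [hgdef]; exact Real.sqrt_nonneg _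
    have hsg : s * γ = δ / 2 := by rw [hγdef]; field_simp
    have hε' : Real.sqrt ε ^ 2 = ε := Real.sq_sqrt hε.le
    have hsq2 : (g x) ^ 2 ≤ (Real.sqrt ε + b) ^ 2 := by
      have h11 : 0 ≤ Real.sqrt ε + b := by positivity
      exact pow_le_pow_left₀ hgxnn hgx 2
    have f1 : 0 ≤ Real.sqrt ε * (b - 1) ^ 2 :=
      mul_nonneg (Real.sqrt_nonneg _) (sq_nonneg _)
    have f2 : 0 ≤ (1 - Real.sqrt ε) * b ^ 2 :=
      mul_nonneg (by linarith only [hsqε1]) (sq_nonneg _)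
    have step2 : 1 - μ x ≤ 2 * (Real.sqrt ε * b) + b ^ 2 := by
      linarith only [hsq2, hgxsq, hε']
    have step3 : 2 * (Real.sqrt ε * b) ≤ Real.sqrt ε + Real.sqrt ε * b ^ 2 := by
      linarith only [f1]
    have step4 : Real.sqrt ε * b ^ 2 ≤ b ^ 2 := by
      linarith only [f2]
    have step5 : 2 * b ^ 2 = s * I + δ / 2 := by
      rw [hb2]; linarith only [hsg]
    linarith only [step2, step3, step4, step5, hsqε]
  -- integrate the pointwise bound
  have hpt : ∀ x ∈ Set.Ioo (-s) s, 1 - (μ x) ^ 2 ≤ 2 * s * I := by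
    intro x hx
    have h1 := hkey x hx
    linarith only [h1, sq_nonneg (1 - μ x)]
  have hint2 : IntegrableOn (fun x => 1 - (μ x) ^ 2) (Set.Ioo (-s) s) :=
    ((continuousOn_const.sub (hcont.pow 2)).integrableOn_Icc).mono_set
      Set.Ioo_subset_Icc_self
  have hconst2 : IntegrableOn (fun _ => 2 * s * I) (Set.Ioo (-s) s) :=
    integrableOn_const measure_Ioo_lt_top.ne
  calc ∫ x in Set.Ioo (-s) s, (1 - (μ x) ^ 2) ≤ ∫ _x in Set.Ioo (-s) s, (2 * s * I) :=
        setIntegral_mono_on hint2 hconst2 measurableSet_Ioo hpt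
    _ = 4 * s ^ 2 * I := by
        rw [setIntegral_const, measureReal_def, Real.volume_Ioo, ENNReal.toReal_ofReal (by linarith),
          smul_eq_mul]
        ring
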